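/- Let (W, S) be a Coxeter system with length function l, and let K, K' ⊆ S. If x is the unique minimal-length element of the double coset W_K x W_{K'} (i.e. x ∈ ᴷW ∩ Wᴷ') and u ∈ W_{K'} is minimal in its coset (W_{K' ∩ x⁻¹Kx})·u (i.e. u has no left descent in K' ∩ x⁻¹Kx), then xu has minimal length in W_K·(xu) and l(xu) = l(x) + l(u). -/

import Mathlib

namespace Lusztig

variable {B : Type*} {W : Type*} [Group W] {M : CoxeterMatrix B}

/-- The standard parabolic subgroup `W_K` generated by the simple reflections in `K`. -/
def WP (cs : CoxeterSystem M W) (K : Set B) : Subgroup W :=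
  Subgroup.closure (cs.simple '' K)

/-- `w` is the unique minimal length element of its left coset `W_K w`
(i.e. `w ∈ ᴷW`). -/
def IsMinL (cs : CoxeterSystem M W) (K : Set B) (w : W) : Prop :=
  ∀ a ∈ WP cs K, a * w ≠ w → cs.length w < cs.length (a * w)

/-- `w` is the unique minimal length element of its right coset `w W_K`
(i.e. `w ∈ Wᴷ`). -/
def IsMinR (cs : CoxeterSystem M W) (K : Set B) (w : W) : Prop :=
  ∀ b ∈ WP cs K, w * b ≠ w → cs.length w < cs.length (w * b)

/-- `x` is the unique minimal length element of its double coset `W_K x W_{K'}`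
(i.e. `x ∈ ᴷWᴷ'`). -/
def IsMinDC (cs : CoxeterSystem M W) (K K' : Set B) (x : W) : Prop :=
  ∀ a ∈ WP cs K, ∀ b ∈ WP cs K', a * x * b ≠ x → cs.length x < cs.length (a * x * b)

/-- `x` is the unique minimal length element of the double coset `W_K g W_{K'}`. -/
def IsMinOf (cs : CoxeterSystem M W) (K K' : Set B) (g x : W) : Prop :=
  (∃ a ∈ WP cs K, ∃ b ∈ WP cs K', x = a * g * b) ∧
  ∀ a ∈ WP cs K, ∀ b ∈ WP cs K', a * g * b ≠ x → cs.length x < cs.length (a * g * b)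

/-- `Ad(x)J ∩ S`, as a set of indices of simple reflections:
the set of `s` with `simple s = x * (simple t) * x⁻¹` for some `t ∈ J`. -/
def AdSet (cs : CoxeterSystem M W) (x : W) (J : Set B) : Set B :=
  {s | ∃ t ∈ J, cs.simple s = x * cs.simple t * x⁻¹}

/-- The product `u 0 * u 1 * ⋯ * u (n-1)`. -/
def pr (u : ℕ → W) (n : ℕ) : W := ((List.range n).map u).prod

/-- Lusztig's set `S(J, ε)` (2.3): sequences `(J_n, J'_n, u_n)` with
`J = J_0 ⊇ J_1 ⊇ ⋯`, `ε(J_n) = ε(J_{n-1}) ∩ Ad(u_0⋯u_{n-1})J_{n-1}` (n ≥ 1),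
`J'_0 = ε(J) = J'`, `J'_n = J_{n-1} ∩ Ad(u_0⋯u_{n-1})⁻¹ε(J_{n-1})` (n ≥ 1),
`u_n ∈ W_{J_{n-1}}` (n ≥ 1), `u_n ∈ {}^{J'_n}W ∩ W^{J_n}` (n ≥ 0).
Here `ε` is encoded by its restriction `f : B ≃ B` to the simple reflections. -/
structure SSeq (cs : CoxeterSystem M W) (f : B ≃ B) (J : Set B) where
  Jn : ℕ → Set B
  J'n : ℕ → Set B
  u : ℕ → W
  hJ0 : Jn 0 = J
  hJ'0 : J'n 0 = f '' J
  hmono : ∀ n, Jn (n + 1) ⊆ Jn n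
  hb : ∀ n, f '' Jn (n + 1) = (f '' Jn n) ∩ AdSet cs (pr u (n + 1)) (Jn n)
  hc : ∀ n, J'n (n + 1) = Jn n ∩ AdSet cs (pr u (n + 1))⁻¹ (f '' Jn n)
  hd : ∀ n, u (n + 1) ∈ WP cs (Jn n)
  he : ∀ n, IsMinL cs (J'n n) (u n) ∧ IsMinR cs (Jn n) (u n)

/-- Lusztig's set `T(J, ε)` (2.2): sequences `(J_n, w_n)` with
`J = J_0 ⊇ J_1 ⊇ ⋯`, `J_n = J_{n-1} ∩ ε⁻¹(Ad(w_{n-1})J_{n-1})` (n ≥ 1),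
`w_n ∈ {}^{ε(J_n)}W^{J_n}` (n ≥ 0), `w_n ∈ W_{ε(J_n)} w_{n-1} W_{J_{n-1}}` (n ≥ 1). -/
structure TSeq (cs : CoxeterSystem M W) (f : B ≃ B) (J : Set B) where
  Jn : ℕ → Set B
  w : ℕ → W
  hJ0 : Jn 0 = J
  hmono : ∀ n, Jn (n + 1) ⊆ Jn n
  hb : ∀ n, Jn (n + 1) = Jn n ∩ f.symm '' AdSet cs (w n) (Jn n)
  hc : ∀ n, IsMinDC cs (f '' Jn n) (Jn n) (w n)
  hd : ∀ n, ∃ a ∈ WP cs (f '' Jn (n + 1)), ∃ b ∈ WP cs (Jn n), w (n + 1) = a * w n * b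

open CoxeterSystem List

open scoped Classical

section Eta

variable (cs : CoxeterSystem M W)

local prefix:100 "s" => cs.simple
local prefix:100 "π" => cs.wordProd
local prefix:100 "ℓ" => cs.length

private lemma zmod2_add_self (x : ZMod 2) : x + x = 0 := by revert x; decide

/-- The function underlying the eta permutation. -/
noncomputable def etaFun (i : B) : W × ZMod 2 → W × ZMod 2 :=
  fun p => (s i * p.1 * s i, p.2 + if p.1 = s i then 1 else 0)

lemma conj_eq_iff (a x y : W) : a * x * a⁻¹ = y ↔ x = a⁻¹ * y * a := by
  constructor
  · intro h; rw [← h]; group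
  · intro h; rw [h]; group

lemma simple_conj_eq_iff (i : B) (x y : W) : s i * x * s i = y ↔ x = s i * y * s i := by
  have := conj_eq_iff (s i) x y
  rwa [cs.inv_simple] at this

lemma etaFun_involutive (i : B) : Function.Involutive (etaFun cs i) := by
  intro p
  simp only [etaFun]
  have h1 : s i * (s i * p.1 * s i) * s i = p.1 := by
    rw [show s i * (s i * p.1 * s i) * s i = (s i * s i) * p.1 * (s i * s i) by group,
      cs.simple_mul_simple_self]
    group
  have h2 : (s i * p.1 * s i = s i) ↔ (p.1 = s i) := by
    rw [simple_conj_eq_iff]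
    have h3 : s i * s i * s i = s i := by rw [cs.simple_mul_simple_self, one_mul]
    constructor
    · intro h; rw [h, h3]
    · intro h; rw [h, h3]
  ext
  · exact h1
  · simp only [h1, h2]
    rcases em (p.1 = s i) with h | h <;> simp [h, zmod2_add_self, add_assoc]

/-- The permutation of `W × ZMod 2` associated to a simple reflection. -/
noncomputable def etaPerm (i : B) : Equiv.Perm (W × ZMod 2) :=
  Function.Involutive.toPerm _ (etaFun_involutive cs i)

lemma etaPerm_apply (i : B) (p : W × ZMod 2) : etaPerm cs i p = etaFun cs i p := rfl

lemma eta_liftable : M.IsLiftable (etaPerm cs) := by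
  intro i j
  set q : W := s i * s j with hq
  clear_value q
  have hkey : ∀ A : W, s i * (s j * A * s j) * s i = q * A * q⁻¹ := by
    intro A
    rw [hq, mul_inv_rev, cs.inv_simple, cs.inv_simple]
    group
  have hstep : s j * q = q⁻¹ * s j := by
    rw [hq, mul_inv_rev, cs.inv_simple, cs.inv_simple]
    group
  have hsisj : s j * s i * s j = q⁻¹ * s j := by
    rw [hq, mul_inv_rev, cs.inv_simple, cs.inv_simple]
  have hswap : ∀ k : ℕ, s j * q ^ k = (q ^ k)⁻¹ * s j := by
    intro k
    induction k with
    | zero => simp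
    | succ k ih =>
      rw [pow_succ', ← mul_assoc, hstep, mul_assoc, ih]
      group
  set v : ℕ → W := fun n => (q ^ n)⁻¹ * s j with hv
  have hv2k : ∀ k : ℕ, (q ^ k)⁻¹ * s j * q ^ k = v (2 * k) := by
    intro k
    rw [mul_assoc, hswap k, hv]
    show (q ^ k)⁻¹ * ((q ^ k)⁻¹ * s j) = (q ^ (2 * k))⁻¹ * s j
    rw [two_mul, pow_add, mul_inv_rev]
    group
  have hv2k1 : ∀ k : ℕ, (q ^ k)⁻¹ * (s j * s i * s j) * q ^ k = v (2 * k + 1) := by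
    intro k
    rw [hsisj, mul_assoc, mul_assoc, hswap k, hv]
    show (q ^ k)⁻¹ * (q⁻¹ * ((q ^ k)⁻¹ * s j)) = (q ^ (2 * k + 1))⁻¹ * s j
    rw [two_mul, pow_add, pow_add, pow_one, mul_inv_rev, mul_inv_rev]
    group
  have hform : ∀ k : ℕ, ∀ p : W × ZMod 2,
      ((etaPerm cs i * etaPerm cs j) ^ k) p =
      (q ^ k * p.1 * (q ^ k)⁻¹,
        p.2 + ∑ n ∈ Finset.range (2 * k), (if p.1 = v n then (1 : ZMod 2) else 0)) := by
    intro k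
    induction k with
    | zero => intro p; simp
    | succ k ih =>
      intro p
      rw [pow_succ']
      have hrw : ((etaPerm cs i * etaPerm cs j) * (etaPerm cs i * etaPerm cs j) ^ k) p
          = (etaPerm cs i * etaPerm cs j) (((etaPerm cs i * etaPerm cs j) ^ k) p) := rfl
      rw [hrw, ih p]
      simp only [Equiv.Perm.mul_apply, etaPerm_apply, etaFun]
      have c1 : (q ^ k * p.1 * (q ^ k)⁻¹ = s j) ↔ p.1 = v (2 * k) := by
        rw [conj_eq_iff, hv2k]
      have c2 : (s j * (q ^ k * p.1 * (q ^ k)⁻¹) * s j = s i) ↔ p.1 = v (2 * k + 1) := by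
        rw [simple_conj_eq_iff, conj_eq_iff, hv2k1]
      ext
      · show s i * (s j * (q ^ k * p.1 * (q ^ k)⁻¹) * s j) * s i
            = q ^ (k + 1) * p.1 * (q ^ (k + 1))⁻¹
        rw [hkey]
        group
      · show (p.2 + ∑ n ∈ Finset.range (2 * k), (if p.1 = v n then (1 : ZMod 2) else 0))
            + (if q ^ k * p.1 * (q ^ k)⁻¹ = s j then (1 : ZMod 2) else 0)
            + (if s j * (q ^ k * p.1 * (q ^ k)⁻¹) * s j = s i then (1 : ZMod 2) else 0)
            = p.2 + ∑ n ∈ Finset.range (2 * (k + 1)), (if p.1 = v n then (1 : ZMod 2) else 0)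
        rw [if_congr c1 rfl rfl, if_congr c2 rfl rfl,
          show 2 * (k + 1) = 2 * k + 1 + 1 by ring, Finset.sum_range_succ, Finset.sum_range_succ]
        ring
  have hqm : q ^ M i j = 1 := by rw [hq]; exact cs.simple_mul_simple_pow i j
  have hper : ∀ n : ℕ, v (n + M i j) = v n := by
    intro n; rw [hv]; show (q ^ (n + M i j))⁻¹ * s j = (q ^ n)⁻¹ * s j
    rw [pow_add, hqm, mul_one]
  apply Equiv.ext
  intro p
  have hsum : ∑ n ∈ Finset.range (2 * M i j), (if p.1 = v n then (1 : ZMod 2) else 0) = 0 := by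
    rw [two_mul, Finset.sum_range_add]
    have heq : ∀ n, (if p.1 = v (M i j + n) then (1 : ZMod 2) else 0)
        = (if p.1 = v n then (1 : ZMod 2) else 0) := by
      intro n; rw [show M i j + n = n + M i j by ring, hper n]
    rw [Finset.sum_congr rfl fun n _ => heq n, zmod2_add_self]
  rw [hform (M i j) p, hqm, hsum]
  simp

-- part 2 (appended after part 1 content, inside section Eta)
/-- The parity representation `W →* Perm (W × ZMod 2)`. -/
noncomputable def Phi : W →* Equiv.Perm (W × ZMod 2) :=
  cs.lift ⟨etaPerm cs, eta_liftable cs⟩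

lemma Phi_simple (i : B) : Phi cs (s i) = etaPerm cs i :=
  cs.lift_apply_simple (eta_liftable cs) i

/-- The eta cocycle: parity of the number of times `t` occurs in a reflection sequence. -/
noncomputable def eta (w t : W) : ZMod 2 := (Phi cs w (t, 0)).2

/-- Indicator sum: the parity of occurrences of `t` in `l`. -/
noncomputable def ind (t : W) (l : List W) : ZMod 2 :=
  (l.map fun x => if t = x then (1 : ZMod 2) else 0).sum

@[simp] lemma ind_nil (t : W) : ind t [] = 0 := rfl

lemma ind_cons (t a : W) (l : List W) :
    ind t (a :: l) = (if t = a then (1 : ZMod 2) else 0) + ind t l := by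
  simp [ind]

lemma ind_of_not_mem {t : W} {l : List W} (h : t ∉ l) : ind t l = 0 := by
  induction l with
  | nil => rfl
  | cons a l ih =>
    have h1 : t ≠ a := fun hh => h (by rw [hh]; exact List.mem_cons_self)
    have h2 : t ∉ l := fun hh => h (List.mem_cons_of_mem a hh)
    rw [ind_cons, if_neg h1, ih h2, add_zero]

lemma ind_of_mem_nodup {t : W} {l : List W} (h : t ∈ l) (hn : l.Nodup) : ind t l = 1 := by
  induction l with
  | nil => simp at h
  | cons a l ih =>
    rw [List.nodup_cons] at hn
    rcases List.mem_cons.mp h with rfl | h'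
    · rw [ind_cons, if_pos rfl, ind_of_not_mem hn.1, add_zero]
    · have hta : t ≠ a := fun hh => hn.1 (hh ▸ h')
      rw [ind_cons, if_neg hta, ih h' hn.2, zero_add]

lemma Phi_wordProd (ω : List B) (t : W) (ε : ZMod 2) :
    Phi cs (π ω) (t, ε) = (π ω * t * (π ω)⁻¹, ε + ind t (cs.rightInvSeq ω)) := by
  induction ω generalizing ε with
  | nil => simp [map_one]
  | cons i ω ih =>
    rw [cs.wordProd_cons, map_mul]
    have hris : cs.rightInvSeq (i :: ω) = (π ω)⁻¹ * s i * (π ω) :: cs.rightInvSeq ω := rfl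
    show Phi cs (s i) (Phi cs (π ω) (t, ε)) = _
    rw [ih ε, Phi_simple, etaPerm_apply]
    simp only [etaFun]
    have hcond : (π ω * t * (π ω)⁻¹ = s i) ↔ (t = (π ω)⁻¹ * s i * (π ω)) := conj_eq_iff _ _ _
    ext
    · show s i * (π ω * t * (π ω)⁻¹) * s i = (s i * π ω) * t * (s i * π ω)⁻¹
      rw [mul_inv_rev, cs.inv_simple]
      group
    · show ε + ind t (cs.rightInvSeq ω) + (if π ω * t * (π ω)⁻¹ = s i then (1 : ZMod 2) else 0)
          = ε + ind t (cs.rightInvSeq (i :: ω))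
      rw [hris, ind_cons, if_congr hcond rfl rfl]
      ring

lemma Phi_apply (w t : W) (ε : ZMod 2) :
    Phi cs w (t, ε) = (w * t * w⁻¹, ε + eta cs w t) := by
  obtain ⟨ω, rfl⟩ := cs.wordProd_surjective w
  have h0 : eta cs (π ω) t = ind t (cs.rightInvSeq ω) := by
    unfold eta
    rw [Phi_wordProd, zero_add]
  rw [Phi_wordProd, h0]

lemma eta_eq_ind (ω : List B) (t : W) : eta cs (π ω) t = ind t (cs.rightInvSeq ω) := by
  unfold eta
  rw [Phi_wordProd, zero_add]

lemma eta_mul (u v t : W) : eta cs (u * v) t = eta cs v t + eta cs u (v * t * v⁻¹) := by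
  have l1 := Phi_apply cs (u * v) t 0
  have l2 : Phi cs (u * v) (t, 0) = Phi cs u (Phi cs v (t, 0)) := by rw [map_mul]; rfl
  rw [Phi_apply cs v t 0, zero_add, Phi_apply cs u] at l2
  rw [l1] at l2
  have l3 := congrArg Prod.snd l2
  simpa using l3

lemma eta_simple_self (i : B) : eta cs (s i) (s i) = 1 := by
  unfold eta
  rw [Phi_simple, etaPerm_apply]
  simp [etaFun]

lemma eta_refl_self {t : W} (ht : cs.IsReflection t) : eta cs t t = 1 := by
  obtain ⟨w, i, rfl⟩ := ht
  have key0 : ∀ a b : ZMod 2, a + b = 0 → a = b := by decide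
  have hws : w * s i * w⁻¹ = w * (s i * w⁻¹) := by group
  have hconj1 : w⁻¹ * (w * s i * w⁻¹) * (w⁻¹)⁻¹ = s i := by group
  have einv : eta cs w⁻¹ (w * s i * w⁻¹) = eta cs w (s i) := by
    have e := eta_mul cs w w⁻¹ (w * s i * w⁻¹)
    rw [mul_inv_cancel] at e
    have e1 : eta cs (1 : W) (w * s i * w⁻¹) = 0 := by simp [eta, map_one]
    rw [e1, hconj1] at e
    exact key0 _ _ e.symm
  have hconj2 : (s i * w⁻¹) * (w * s i * w⁻¹) * (s i * w⁻¹)⁻¹ = s i := by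
    have : (s i * w⁻¹) * (w * s i * w⁻¹) * (s i * w⁻¹)⁻¹ = s i * (s i * s i) := by
      rw [mul_inv_rev, cs.inv_simple]
      group
    rw [this, cs.simple_mul_simple_self, mul_one]
  have hmain := eta_mul cs w (s i * w⁻¹) (w * s i * w⁻¹)
  rw [← hws, hconj2] at hmain
  have hsub := eta_mul cs (s i) w⁻¹ (w * s i * w⁻¹)
  rw [hconj1] at hsub
  rw [hmain, hsub, einv, eta_simple_self]
  generalize eta cs w (s i) = a
  revert a
  decide

lemma mem_rightInvSeq_of_eta_one {ω : List B} {t : W} (h : eta cs (π ω) t = 1) :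
    t ∈ cs.rightInvSeq ω := by
  by_contra hmem
  rw [eta_eq_ind, ind_of_not_mem hmem] at h
  exact (by decide : (0 : ZMod 2) ≠ 1) h

lemma inversion_of_eta_one {w t : W} (h : eta cs w t = 1) : ℓ (w * t) < ℓ w := by
  obtain ⟨ω, hred, rfl⟩ := cs.exists_reduced_word' w
  exact (cs.isRightInversion_of_mem_rightInvSeq hred
    (mem_rightInvSeq_of_eta_one cs h)).2

lemma eta_one_of_inversion {w t : W} (ht : cs.IsReflection t) (hlt : ℓ (w * t) < ℓ w) :
    eta cs w t = 1 := by
  by_contra h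
  have h0 : eta cs w t = 0 := by
    revert h
    generalize eta cs w t = a
    revert a
    decide
  have httt : t * t * t⁻¹ = t := by rw [ht.mul_self, one_mul, ht.inv]
  have h1 : eta cs (w * t) t = 1 := by
    rw [eta_mul, httt, h0, add_zero, eta_refl_self cs ht]
  have h2 := inversion_of_eta_one cs h1
  rw [mul_assoc, ht.mul_self, mul_one] at h2
  omega

lemma mem_rightInvSeq_of_isRightInversion {ω : List B} {t : W}
    (ht : cs.IsReflection t) (hlt : ℓ (π ω * t) < ℓ (π ω)) : t ∈ cs.rightInvSeq ω :=
  mem_rightInvSeq_of_eta_one cs (eta_one_of_inversion cs ht hlt)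

theorem right_exchange {ω : List B} {t : W} (ht : cs.IsReflection t)
    (hlt : ℓ (π ω * t) < ℓ (π ω)) :
    ∃ j < ω.length, π (ω.eraseIdx j) = π ω * t := by
  have hmem := mem_rightInvSeq_of_isRightInversion cs ht hlt
  obtain ⟨j, hj, hjt⟩ := List.mem_iff_getElem.mp hmem
  rw [cs.length_rightInvSeq] at hj
  refine ⟨j, hj, ?_⟩
  rw [← cs.wordProd_mul_getD_rightInvSeq ω j]
  congr 1
  rw [List.getD_eq_getElem _ _ (by rw [cs.length_rightInvSeq]; exact hj)]
  exact hjt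

theorem left_exchange {ω : List B} {t : W} (ht : cs.IsReflection t)
    (hlt : ℓ (t * π ω) < ℓ (π ω)) :
    ∃ j < ω.length, π (ω.eraseIdx j) = t * π ω := by
  have h1 : ℓ (π ω.reverse * t) < ℓ (π ω.reverse) := by
    rw [cs.wordProd_reverse]
    calc ℓ ((π ω)⁻¹ * t) = ℓ (((π ω)⁻¹ * t)⁻¹) := (cs.length_inv _).symm
    _ = ℓ (t * π ω) := by rw [mul_inv_rev, inv_inv, ht.inv]
    _ < ℓ (π ω) := hlt
    _ = ℓ ((π ω)⁻¹) := (cs.length_inv _).symm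
  have hmem : t ∈ cs.rightInvSeq ω.reverse :=
    mem_rightInvSeq_of_isRightInversion cs ht h1
  rw [cs.rightInvSeq_reverse, List.mem_reverse] at hmem
  obtain ⟨j, hj, hjt⟩ := List.mem_iff_getElem.mp hmem
  rw [cs.length_leftInvSeq] at hj
  refine ⟨j, hj, ?_⟩
  rw [← cs.getD_leftInvSeq_mul_wordProd ω j]
  congr 1
  rw [List.getD_eq_getElem _ _ (by rw [cs.length_leftInvSeq]; exact hj)]
  exact hjt

/-! ### Deletion and parabolic subgroup lemmas -/

theorem deletion {ω : List B} (h : ¬ cs.IsReduced ω) :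
    ∃ ω' : List B, ω'.Sublist ω ∧ ω'.length < ω.length ∧ π ω' = π ω := by
  classical
  have hne : ω ≠ [] := by rintro rfl; exact h (by simp [CoxeterSystem.IsReduced])
  have hlen1 : 1 ≤ ω.length := List.length_pos_iff.mpr hne
  have hP : ∃ n, ¬ cs.IsReduced (ω.take (n + 1)) :=
    ⟨ω.length - 1, by rw [show ω.length - 1 + 1 = ω.length by omega, List.take_length]; exact h⟩
  let j := Nat.find hP
  have hj : ¬ cs.IsReduced (ω.take (j + 1)) := Nat.find_spec hP
  have hjle : j ≤ ω.length - 1 := Nat.find_le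
    (by rw [show ω.length - 1 + 1 = ω.length by omega, List.take_length]; exact h)
  have hjlt : j < ω.length := by omega
  have hjred : cs.IsReduced (ω.take j) := by
    rcases Nat.eq_zero_or_pos j with h0 | h0
    · rw [h0]; simp [CoxeterSystem.IsReduced]
    · have := Nat.find_min hP (show j - 1 < j by omega)
      rw [not_not, show j - 1 + 1 = j by omega] at this
      exact this
  have htake : ω.take (j + 1) = ω.take j ++ [ω[j]] := by
    rw [List.take_succ, List.getElem?_eq_getElem hjlt]
    rfl
  have hlentake : (ω.take j).length = j := by rw [List.length_take]; omega
  have hpij : ℓ (π (ω.take j)) = j := by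
    have : ℓ (π (ω.take j)) = (ω.take j).length := hjred
    omega
  have hlt : ℓ (π (ω.take j) * s (ω[j])) < ℓ (π (ω.take j)) := by
    have hne2 : ℓ (π (ω.take (j + 1))) ≠ (ω.take (j + 1)).length := hj
    have hlen2 : (ω.take (j + 1)).length = j + 1 := by rw [List.length_take]; omega
    have heq : π (ω.take (j + 1)) = π (ω.take j) * s (ω[j]) := by
      rw [htake, cs.wordProd_append, cs.wordProd_singleton]
    rcases cs.length_mul_simple (π (ω.take j)) (ω[j]) with hc | hc
    · exfalso; apply hne2; rw [heq, hc, hpij, hlen2]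
    · omega
  obtain ⟨k, hk, hke⟩ := right_exchange cs (cs.isReflection_simple (ω[j])) hlt
  rw [hlentake] at hk
  refine ⟨(ω.take j).eraseIdx k ++ ω.drop (j + 1), ?_, ?_, ?_⟩
  · have s1 : (ω.take j).eraseIdx k <+ ω.take j := List.eraseIdx_sublist _ _
    have s2 : ω.take j <+ ω.take (j + 1) := by
      rw [htake]; exact List.sublist_append_left _ _
    have s3 : (ω.take j).eraseIdx k ++ ω.drop (j + 1) <+ ω.take (j + 1) ++ ω.drop (j + 1) :=
      List.Sublist.append (s1.trans s2) (List.Sublist.refl _)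
    rwa [List.take_append_drop] at s3
  · have l1 : ((ω.take j).eraseIdx k).length = j - 1 := by
      rw [List.length_eraseIdx_of_lt (by rw [hlentake]; exact hk), hlentake]
    rw [List.length_append, l1, List.length_drop]
    omega
  · calc π ((ω.take j).eraseIdx k ++ ω.drop (j + 1))
        = π ((ω.take j).eraseIdx k) * π (ω.drop (j + 1)) := cs.wordProd_append _ _
      _ = (π (ω.take j) * s (ω[j])) * π (ω.drop (j + 1)) := by rw [hke]
      _ = π (ω.take (j + 1)) * π (ω.drop (j + 1)) := by
          rw [htake, cs.wordProd_append, cs.wordProd_singleton]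
      _ = π ω := by rw [← cs.wordProd_append, List.take_append_drop]

theorem wordProd_mem_WP {K : Set B} {ω : List B} (h : ∀ i ∈ ω, i ∈ K) : π ω ∈ WP cs K := by
  induction ω with
  | nil => rw [cs.wordProd_nil]; exact Subgroup.one_mem _
  | cons a ω ih =>
    rw [cs.wordProd_cons]
    exact mul_mem (Subgroup.subset_closure ⟨a, h a (List.mem_cons_self), rfl⟩)
      (ih fun i hi => h i (List.mem_cons_of_mem a hi))

theorem exists_word_of_mem_WP {K : Set B} {w : W} (h : w ∈ WP cs K) :
    ∃ ω : List B, (∀ i ∈ ω, i ∈ K) ∧ π ω = w := by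
  induction h using Subgroup.closure_induction with
  | mem x hx =>
    obtain ⟨i, hi, rfl⟩ := hx
    exact ⟨[i], by simpa using hi, cs.wordProd_singleton i⟩
  | one => exact ⟨[], by simp, cs.wordProd_nil⟩
  | mul x y hx hy ihx ihy =>
    obtain ⟨ω₁, h1, e1⟩ := ihx
    obtain ⟨ω₂, h2, e2⟩ := ihy
    exact ⟨ω₁ ++ ω₂, fun i hi => (List.mem_append.mp hi).elim (h1 i) (h2 i),
      by rw [cs.wordProd_append, e1, e2]⟩
  | inv x hx ih =>
    obtain ⟨ω, h1, e1⟩ := ih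
    exact ⟨ω.reverse, fun i hi => h1 i (List.mem_reverse.mp hi),
      by rw [cs.wordProd_reverse, e1]⟩

theorem exists_reduced_word_of_mem_WP {K : Set B} {w : W} (h : w ∈ WP cs K) :
    ∃ ω : List B, (∀ i ∈ ω, i ∈ K) ∧ cs.IsReduced ω ∧ π ω = w := by
  obtain ⟨ω, hK, hπ⟩ := exists_word_of_mem_WP cs h
  suffices H : ∀ n (ω : List B), ω.length ≤ n → (∀ i ∈ ω, i ∈ K) →
      ∃ ω' : List B, (∀ i ∈ ω', i ∈ K) ∧ cs.IsReduced ω' ∧ π ω' = π ω by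
    obtain ⟨ω', a, b, c⟩ := H ω.length ω le_rfl hK
    exact ⟨ω', a, b, by rw [c, hπ]⟩
  intro n
  induction n with
  | zero =>
    intro ω hlen _
    rw [List.length_eq_zero_iff.mp (Nat.le_zero.mp hlen)]
    exact ⟨[], by simp, by simp [CoxeterSystem.IsReduced], rfl⟩
  | succ n ih =>
    intro ω hlen hK
    by_cases hred : cs.IsReduced ω
    · exact ⟨ω, hK, hred, rfl⟩
    · obtain ⟨ω', hsub, hlt, he⟩ := deletion cs hred
      obtain ⟨ω'', a, b, c⟩ := ih ω' (by omega) (fun i hi => hK i (hsub.subset hi))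
      exact ⟨ω'', a, b, by rw [c, he]⟩

/-! ### Minimal coset representatives -/

theorem min_coset_additive_right {K' : Set B} {x : W}
    (hmin : ∀ b ∈ WP cs K', ℓ x ≤ ℓ (x * b)) :
    ∀ u ∈ WP cs K', ℓ (x * u) = ℓ x + ℓ u := by
  have main : ∀ υ : List B, (∀ i ∈ υ, i ∈ K') → cs.IsReduced υ →
      ℓ (x * π υ) = ℓ x + υ.length := by
    intro υ
    induction υ using List.reverseRecOn with
    | nil => intro _ _; simp
    | append_singleton υ' i ih =>
      intro hK hred
      have hK' : ∀ i' ∈ υ', i' ∈ K' := fun i' h => hK i' (List.mem_append_left _ h)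
      have hred' : cs.IsReduced υ' := by
        have := CoxeterSystem.IsReduced.take hred υ'.length
        rwa [List.take_left] at this
      have ihv := ih hK' hred'
      rw [cs.wordProd_append, cs.wordProd_singleton, List.length_append,
        List.length_singleton, ← mul_assoc]
      rcases cs.length_mul_simple (x * π υ') i with hc | hc
      · rw [hc, ihv]; omega
      · exfalso
        obtain ⟨χ, hχred, hχ⟩ := cs.exists_reduced_word' x
        have hχlen : χ.length = ℓ x := by
          have : ℓ (π χ) = χ.length := hχred
          rw [← hχ] at this
          omega
        have hπcat : π (χ ++ υ') = x * π υ' := by rw [cs.wordProd_append, ← hχ]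
        have hlt : ℓ (π (χ ++ υ') * s i) < ℓ (π (χ ++ υ')) := by
          rw [hπcat, ihv]; omega
        obtain ⟨k, hk, hke⟩ := right_exchange cs (cs.isReflection_simple i) hlt
        rw [hπcat] at hke
        rw [List.length_append] at hk
        by_cases hcase : k < χ.length
        · rw [List.eraseIdx_append_of_lt_length hcase] at hke
          have hb : x * (π υ' * s i * (π υ')⁻¹) = π (χ.eraseIdx k) := by
            have h7 : π (χ.eraseIdx k) * π υ' = x * π υ' * s i := by
              rw [← cs.wordProd_append, hke]
            calc x * (π υ' * s i * (π υ')⁻¹) = (x * π υ' * s i) * (π υ')⁻¹ := by group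
              _ = (π (χ.eraseIdx k) * π υ') * (π υ')⁻¹ := by rw [h7]
              _ = π (χ.eraseIdx k) := by group
          have hbWP : π υ' * s i * (π υ')⁻¹ ∈ WP cs K' :=
            mul_mem (mul_mem (wordProd_mem_WP cs hK')
              (Subgroup.subset_closure ⟨i, hK i (List.mem_append_right _ (by simp)), rfl⟩))
              (inv_mem (wordProd_mem_WP cs hK'))
          have h2 := hmin _ hbWP
          rw [hb] at h2
          have h3 : ℓ (π (χ.eraseIdx k)) ≤ χ.length - 1 :=
            le_trans (cs.length_wordProd_le _) (le_of_eq (List.length_eraseIdx_of_lt hcase))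
          omega
        · push_neg at hcase
          rw [List.eraseIdx_append_of_length_le hcase] at hke
          have h4 : π (υ'.eraseIdx (k - χ.length)) = π υ' * s i := by
            apply mul_left_cancel (a := x)
            rw [← mul_assoc, ← hke, cs.wordProd_append, hχ]
          have h5 : ℓ (π υ' * s i) ≤ υ'.length - 1 := by
            rw [← h4]
            exact le_trans (cs.length_wordProd_le _)
              (le_of_eq (List.length_eraseIdx_of_lt (by omega)))
          have h6 : ℓ (π υ' * s i) = υ'.length + 1 := by
            have h8 : ℓ (π (υ' ++ [i])) = (υ' ++ [i]).length := hred
            rw [cs.wordProd_append, cs.wordProd_singleton, List.length_append,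
              List.length_singleton] at h8
            exact h8
          omega
  intro u hu
  obtain ⟨υ, hK, hred, hπ⟩ := exists_reduced_word_of_mem_WP cs hu
  have h9 := main υ hK hred
  have h10 : ℓ u = υ.length := by
    have : ℓ (π υ) = υ.length := hred
    rw [hπ] at this
    exact this
  rw [hπ] at h9
  omega

theorem minimal_of_no_rightDescent {K' : Set B} {x : W}
    (hnd : ∀ j ∈ K', ¬ cs.IsRightDescent x j) :
    ∀ b ∈ WP cs K', ℓ x ≤ ℓ (x * b) := by
  classical
  have hex : ∃ n, ∃ b ∈ WP cs K', ℓ (x * b) = n :=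
    ⟨ℓ (x * 1), 1, Subgroup.one_mem _, rfl⟩
  obtain ⟨b₀, hb₀WP, hb₀⟩ := Nat.find_spec hex
  have hminy : ∀ b ∈ WP cs K', ℓ (x * b₀) ≤ ℓ (x * b) := by
    intro b hb
    rw [hb₀]
    exact Nat.find_le ⟨b, hb, rfl⟩
  have hymin : ∀ c ∈ WP cs K', ℓ (x * b₀) ≤ ℓ ((x * b₀) * c) := by
    intro c hc
    rw [show (x * b₀) * c = x * (b₀ * c) by group]
    exact hminy _ (mul_mem hb₀WP hc)
  have hyadd := min_coset_additive_right cs hymin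
  have hxlen : ℓ x = ℓ (x * b₀) + ℓ b₀⁻¹ := by
    have h1 := hyadd b₀⁻¹ (inv_mem hb₀WP)
    rw [show (x * b₀) * b₀⁻¹ = x by group] at h1
    exact h1
  by_cases hb1 : b₀ = 1
  · intro b hb
    have h2 := hminy b hb
    rwa [hb1, mul_one] at h2
  · exfalso
    obtain ⟨ε, hεK, hεred, hεπ⟩ := exists_reduced_word_of_mem_WP cs (inv_mem hb₀WP)
    have hεne : ε ≠ [] := by
      rintro rfl
      rw [cs.wordProd_nil] at hεπ
      exact hb1 (by rw [← inv_inv b₀, ← hεπ, inv_one])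
    rcases (List.eq_nil_or_concat ε) with rfl | ⟨ε', jl, rfl⟩
    · exact hεne rfl
    · rw [List.concat_eq_append] at hεπ hεK hεred
      have hεlen : (ε' ++ [jl]).length = ℓ b₀⁻¹ := by
        have : ℓ (π (ε' ++ [jl])) = (ε' ++ [jl]).length := hεred
        rw [hεπ] at this
        omega
      have hb₀s : b₀⁻¹ * s jl = π ε' := by
        rw [← hεπ, cs.wordProd_append, cs.wordProd_singleton,
          mul_assoc, cs.simple_mul_simple_self, mul_one]
      have hdesc : cs.IsRightDescent x jl := by
        show ℓ (x * s jl) < ℓ x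
        have h3 : x * s jl = (x * b₀) * (π ε') := by
          rw [← hb₀s]
          group
        have h4 : π ε' ∈ WP cs K' :=
          wordProd_mem_WP cs (fun i hi => hεK i (List.mem_append_left _ hi))
        have h5 : ℓ (π ε') ≤ ε'.length := cs.length_wordProd_le _
        have h6 := hyadd (π ε') h4
        rw [← h3] at h6
        rw [List.length_append, List.length_singleton] at hεlen
        have hb₀pos : 1 ≤ ℓ b₀⁻¹ := by omega
        omega
      exact hnd jl (hεK jl (List.mem_append_right _ (by simp))) hdesc

theorem no_rightDescent_additive {K' : Set B} {x : W}
    (hnd : ∀ j ∈ K', ¬ cs.IsRightDescent x j) :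
    ∀ u ∈ WP cs K', ℓ (x * u) = ℓ x + ℓ u :=
  min_coset_additive_right cs (minimal_of_no_rightDescent cs hnd)

theorem no_leftDescent_additive {K : Set B} {w : W}
    (hnd : ∀ i ∈ K, ¬ cs.IsLeftDescent w i) :
    ∀ a ∈ WP cs K, ℓ (a * w) = ℓ a + ℓ w := by
  intro a ha
  have hnd' : ∀ j ∈ K, ¬ cs.IsRightDescent w⁻¹ j := fun j hj hdesc =>
    hnd j hj ((cs.isRightDescent_inv_iff).mp hdesc)
  have h1 := no_rightDescent_additive cs hnd' a⁻¹ (inv_mem ha)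
  calc ℓ (a * w) = ℓ ((a * w)⁻¹) := (cs.length_inv _).symm
    _ = ℓ (w⁻¹ * a⁻¹) := by rw [mul_inv_rev]
    _ = ℓ w⁻¹ + ℓ a⁻¹ := h1
    _ = ℓ a + ℓ w := by rw [cs.length_inv, cs.length_inv]; omega

lemma simple_ne_one (i : B) : s i ≠ 1 := by
  intro h
  have h1 := cs.length_simple i
  rw [h, cs.length_one] at h1
  omega

end Eta


/-- 2.1(a): if `x ∈ ᴷWᴷ'` and `u ∈ W_{K'}` has no left descent in
`K' ∩ Ad(x⁻¹)K`, then `xu ∈ ᴷW` and `l(xu) = l(x) + l(u)`. -/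
theorem statement0 (cs : CoxeterSystem M W) (K K' : Set B) (x u : W)
    (hx : IsMinDC cs K K' x) (hu : u ∈ WP cs K')
    (humin : IsMinL cs (K' ∩ AdSet cs x⁻¹ K) u) :
    IsMinL cs K (x * u) ∧ cs.length (x * u) = cs.length x + cs.length u := by
  classical
  have hxR : ∀ b ∈ WP cs K', cs.length x ≤ cs.length (x * b) := by
    intro b hb
    by_cases h : x * b = x
    · rw [h]
    · have h1 := hx 1 (Subgroup.one_mem _) b hb (by rwa [one_mul])
      rw [one_mul] at h1
      exact le_of_lt h1
  have hadd := min_coset_additive_right cs hxR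
  have h2 : cs.length (x * u) = cs.length x + cs.length u := hadd u hu
  refine ⟨?_, h2⟩
  have hnd : ∀ i ∈ K, ¬ cs.IsLeftDescent (x * u) i := by
    intro i hiK hdesc
    have hsiWP : cs.simple i ∈ WP cs K := Subgroup.subset_closure ⟨i, hiK, rfl⟩
    have hsix : cs.length x < cs.length (cs.simple i * x) := by
      have hne : cs.simple i * x * 1 ≠ x := by
        rw [mul_one]
        intro h
        exact simple_ne_one cs i (by
          have h0 := congrArg (· * x⁻¹) h
          simpa using h0)
      have h1 := hx (cs.simple i) hsiWP 1 (Subgroup.one_mem _) hne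
      rwa [mul_one] at h1
    obtain ⟨χ, hχred, hχ⟩ := cs.exists_reduced_word' x
    obtain ⟨υ, hυK, hυred, hυ⟩ := exists_reduced_word_of_mem_WP cs hu
    have hχlen : χ.length = cs.length x := by
      have h1 : cs.length (cs.wordProd χ) = χ.length := hχred
      rw [← hχ] at h1
      omega
    have hυlen : υ.length = cs.length u := by
      have h1 : cs.length (cs.wordProd υ) = υ.length := hυred
      rw [hυ] at h1
      omega
    have hπcat : cs.wordProd (χ ++ υ) = x * u := by rw [cs.wordProd_append, ← hχ, hυ]
    have hlt : cs.length (cs.simple i * cs.wordProd (χ ++ υ))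
        < cs.length (cs.wordProd (χ ++ υ)) := by
      rw [hπcat]
      exact hdesc
    obtain ⟨j, hj, hje⟩ := left_exchange cs (cs.isReflection_simple i) hlt
    rw [hπcat] at hje
    rw [List.length_append] at hj
    by_cases hcase : j < χ.length
    · rw [List.eraseIdx_append_of_lt_length hcase] at hje
      have h3 : cs.wordProd (χ.eraseIdx j) = cs.simple i * x := by
        apply mul_right_cancel (b := u)
        rw [← hυ, ← cs.wordProd_append, hje, hυ]
        group
      have h4 : cs.length (cs.simple i * x) ≤ χ.length - 1 := by
        rw [← h3]
        exact le_trans (cs.length_wordProd_le _) (le_of_eq (List.length_eraseIdx_of_lt hcase))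
      omega
    · push_neg at hcase
      rw [List.eraseIdx_append_of_length_le hcase] at hje
      set v := x⁻¹ * cs.simple i * x with hv
      have hxv : x * v = cs.simple i * x := by rw [hv]; group
      have h5 : x * cs.wordProd (υ.eraseIdx (j - χ.length)) = cs.simple i * (x * u) := by
        rw [← hje, cs.wordProd_append, ← hχ]
      have hveq : v = cs.wordProd (υ.eraseIdx (j - χ.length)) * u⁻¹ := by
        calc v = x⁻¹ * (cs.simple i * (x * u)) * u⁻¹ := by rw [hv]; group
          _ = x⁻¹ * (x * cs.wordProd (υ.eraseIdx (j - χ.length))) * u⁻¹ := by rw [h5]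
          _ = cs.wordProd (υ.eraseIdx (j - χ.length)) * u⁻¹ := by group
      have hvWP : v ∈ WP cs K' := by
        rw [hveq]
        exact mul_mem (wordProd_mem_WP cs
          (fun i' hi' => hυK i' ((List.eraseIdx_sublist υ _).subset hi'))) (inv_mem hu)
      have hsxle : cs.length (cs.simple i * x) ≤ 1 + cs.length x := by
        have h8 := cs.length_mul_le (cs.simple i) x
        rwa [cs.length_simple] at h8
      have hlv : cs.length v = 1 := by
        have h6 := hadd v hvWP
        rw [hxv] at h6
        omega
      obtain ⟨ε, hεK, hεred, hεπ⟩ := exists_reduced_word_of_mem_WP cs hvWP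
      have hεlen : ε.length = 1 := by
        have h1 : cs.length (cs.wordProd ε) = ε.length := hεred
        rw [hεπ, hlv] at h1
        omega
      obtain ⟨j₁, rfl⟩ := List.length_eq_one_iff.mp hεlen
      have hj₁K' : j₁ ∈ K' := hεK j₁ (by simp)
      have hvj : v = cs.simple j₁ := by rw [← hεπ, cs.wordProd_singleton]
      have hAd : j₁ ∈ AdSet cs x⁻¹ K := ⟨i, hiK, by rw [← hvj, hv, inv_inv]⟩
      have hvWP2 : v ∈ WP cs (K' ∩ AdSet cs x⁻¹ K) := by
        rw [hvj]
        exact Subgroup.subset_closure ⟨j₁, ⟨hj₁K', hAd⟩, rfl⟩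
      have hvne : v * u ≠ u := by
        intro h
        have h1 : v = 1 := by
          have h0 := congrArg (· * u⁻¹) h
          simpa using h0
        rw [h1, cs.length_one] at hlv
        omega
      have hmu := humin v hvWP2 hvne
      have hvuWP : v * u ∈ WP cs K' := mul_mem hvWP hu
      have h7 : cs.length (cs.simple i * (x * u)) = cs.length x + cs.length (v * u) := by
        rw [show cs.simple i * (x * u) = x * (v * u) by rw [hv]; group]
        exact hadd _ hvuWP
      have hdesc' : cs.length (cs.simple i * (x * u)) < cs.length (x * u) := hdesc
      omega
  intro a haWP hane
  have ha1 : a ≠ 1 := fun h => hane (by rw [h, one_mul])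
  have hal : 1 ≤ cs.length a := by
    rcases Nat.eq_zero_or_pos (cs.length a) with h | h
    · exact absurd (cs.length_eq_zero_iff.mp h) ha1
    · omega
  have h9 := no_leftDescent_additive cs hnd a haWP
  omega

end Lusztig
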